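/- Main Theorem (syntactic cut-elimination for the one-variable modal μ-calculus): For every sequent Γ of L0, if Γ is derivable in the finitary system M (which includes the cut rule and the induction rule), then Γ is derivable in the cut-free infinitary system K_ω. -/

import Mathlib

namespace OneVarMu

/-- Operator forms of the language `L_Ω` (one fixed variable `X`, written `var`).
`nut` is the auxiliary fixed-point connective `ν̃`; `L0` operator forms are the
`nut`-free ones. -/
inductive Form : Type
  | atom  : ℕ → Form          -- p_i
  | natom : ℕ → Form          -- p̄_i
  | var   : Form              -- X
  | and   : Form → Form → Form
  | or    : Form → Form → Form
  | box   : Form → Form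
  | dia   : Form → Form
  | mu    : Form → Form       -- μX.A
  | nu    : Form → Form       -- νX.A
  | nut   : Form → Form       -- ν̃X.A
  deriving DecidableEq

namespace Form

/-- Negation `¬A` (on `ν̃` we extend the `L0` definition as for `ν`). -/
def compl : Form → Form
  | atom i  => natom i
  | natom i => atom i
  | var     => var
  | and A B => or (compl A) (compl B)
  | or A B  => and (compl A) (compl B)
  | box A   => dia (compl A)
  | dia A   => box (compl A)
  | mu A    => nu (compl A)
  | nu A    => mu (compl A)
  | nut A   => mu (compl A)

/-- `subst A B` is `A(B)`: substitute `B` for every free occurrence of `X` in `A`. -/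
def subst : Form → Form → Form
  | atom i, _  => atom i
  | natom i, _ => natom i
  | var, B     => B
  | and A1 A2, B => and (subst A1 B) (subst A2 B)
  | or A1 A2, B  => or (subst A1 B) (subst A2 B)
  | box A, B   => box (subst A B)
  | dia A, B   => dia (subst A B)
  | mu A, _    => mu A
  | nu A, _    => nu A
  | nut A, _   => nut A

/-- The level of an operator form: maximal nesting of fixed-point operators. -/
def lev : Form → ℕ
  | atom _  => 0
  | natom _ => 0
  | var     => 0
  | and A B => max (lev A) (lev B)
  | or A B  => max (lev A) (lev B)
  | box A   => lev A
  | dia A   => lev A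
  | mu A    => lev A + 1
  | nu A    => lev A + 1
  | nut A   => lev A + 1

/-- `A'`: replace every occurrence of `νX` by `ν̃X`. -/
def prime : Form → Form
  | atom i  => atom i
  | natom i => natom i
  | var     => var
  | and A B => and (prime A) (prime B)
  | or A B  => or (prime A) (prime B)
  | box A   => box (prime A)
  | dia A   => dia (prime A)
  | mu A    => mu (prime A)
  | nu A    => nut (prime A)
  | nut A   => nut (prime A)

/-- `A` is an operator form of `L0`, i.e. contains no `ν̃`. -/
def IsL0 : Form → Prop
  | and A B => IsL0 A ∧ IsL0 B
  | or A B  => IsL0 A ∧ IsL0 B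
  | box A   => IsL0 A
  | dia A   => IsL0 A
  | mu A    => IsL0 A
  | nu A    => IsL0 A
  | nut _   => False
  | _       => True

/-- `A` has no free occurrence of the variable `X`, i.e. `A` is a formula. -/
def ClosedF : Form → Prop
  | var     => False
  | and A B => ClosedF A ∧ ClosedF B
  | or A B  => ClosedF A ∧ ClosedF B
  | box A   => ClosedF A
  | dia A   => ClosedF A
  | _       => True

/-- `⊤ := p ∨ p̄` for a fixed atomic proposition. -/
def top : Form := or (atom 0) (natom 0)

/-- Finite iterations `A^i(⊤)`. -/
def iter (A : Form) : ℕ → Form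
  | 0     => top
  | n + 1 => subst A (iter A n)

/-- `OccursIn A B`: the operator form `A` occurs (as a subterm) in `B`. -/
def OccursIn (A : Form) : Form → Prop
  | atom i  => A = atom i
  | natom i => A = natom i
  | var     => A = var
  | and C D => A = and C D ∨ OccursIn A C ∨ OccursIn A D
  | or C D  => A = or C D ∨ OccursIn A C ∨ OccursIn A D
  | box C   => A = box C ∨ OccursIn A C
  | dia C   => A = dia C ∨ OccursIn A C
  | mu C    => A = mu C ∨ OccursIn A C
  | nu C    => A = nu C ∨ OccursIn A C
  | nut C   => A = nut C ∨ OccursIn A C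

/-- `replace t r A`: simultaneously replace every occurrence of `t` in `A` by `r`. -/
def replace (t r : Form) : Form → Form
  | and A B => if and A B = t then r else and (replace t r A) (replace t r B)
  | or A B  => if or A B = t then r else or (replace t r A) (replace t r B)
  | box A   => if box A = t then r else box (replace t r A)
  | dia A   => if dia A = t then r else dia (replace t r A)
  | mu A    => if mu A = t then r else mu (replace t r A)
  | nu A    => if nu A = t then r else nu (replace t r A)
  | nut A   => if nut A = t then r else nut (replace t r A)
  | A       => if A = t then r else A

end Form

/-- Sequents are finite sets of formulae. -/
abbrev Sequent := Finset Form

/-- Every member is a formula (no free `X`): a sequent of `L_Ω`. -/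
def ClosedSeq (Γ : Sequent) : Prop := ∀ C ∈ Γ, C.ClosedF

/-- A sequent of `L0`: every member is a `ν̃`-free formula. -/
def L0Seq (Γ : Sequent) : Prop := ∀ C ∈ Γ, C.IsL0 ∧ C.ClosedF

/-- `Γ` is `h`-positive: every `ν̃X.A` occurring in it has level `< h`. -/
def Positive (h : ℕ) (Γ : Sequent) : Prop :=
  ∀ C ∈ Γ, ∀ B : Form, Form.OccursIn (Form.nut B) C → Form.lev (Form.nut B) < h

/-- Every formula of the sequent has level `≤ k`. -/
def SeqLevLE (k : ℕ) (Γ : Sequent) : Prop := ∀ C ∈ Γ, C.lev ≤ k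

/-- The infinitary cut-free system `K_ω`. -/
inductive KDer : Sequent → Prop
  | ax (Γ : Sequent) (i : ℕ) :
      KDer (insert (Form.atom i) (insert (Form.natom i) Γ))
  | orR (Γ : Sequent) (A B : Form) :
      KDer (insert A (insert B Γ)) → KDer (insert (Form.or A B) Γ)
  | andR (Γ : Sequent) (A B : Form) :
      KDer (insert A Γ) → KDer (insert B Γ) → KDer (insert (Form.and A B) Γ)
  | boxR (Γ S : Sequent) (A : Form) :
      KDer (insert A Γ) → KDer (Γ.image Form.dia ∪ insert (Form.box A) S)
  | clo (Γ : Sequent) (A : Form) :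
      KDer (insert (Form.subst A (Form.mu A)) Γ) → KDer (insert (Form.mu A) Γ)
  | nuR (Γ : Sequent) (A : Form) :
      (∀ i : ℕ, KDer (insert (Form.iter A i) Γ)) → KDer (insert (Form.nu A) Γ)

/-- The finitary system `M` (with induction rule and cut). -/
inductive MDer : Sequent → Prop
  | ax (Γ : Sequent) (i : ℕ) :
      MDer (insert (Form.atom i) (insert (Form.natom i) Γ))
  | axMu (Γ : Sequent) (A : Form) :
      MDer (insert (Form.mu A) (insert (Form.compl (Form.mu A)) Γ))
  | orR (Γ : Sequent) (A B : Form) :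
      MDer (insert A (insert B Γ)) → MDer (insert (Form.or A B) Γ)
  | andR (Γ : Sequent) (A B : Form) :
      MDer (insert A Γ) → MDer (insert B Γ) → MDer (insert (Form.and A B) Γ)
  | boxR (Γ S : Sequent) (A : Form) :
      MDer (insert A Γ) → MDer (Γ.image Form.dia ∪ insert (Form.box A) S)
  | clo (Γ : Sequent) (A : Form) :
      MDer (insert (Form.subst A (Form.mu A)) Γ) → MDer (insert (Form.mu A) Γ)
  | ind (A B : Form) :
      MDer (insert (Form.compl (Form.subst A B)) {B}) →
      MDer (insert (Form.compl (Form.mu A)) {B})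
  | cut (Γ : Sequent) (A : Form) :
      A.IsL0 → A.ClosedF →
      MDer (insert A Γ) → MDer (insert (Form.compl A) Γ) → MDer Γ

/-- The finitary system `M`, with the extra recording that every sequent occurring
in the proof (i.e. the conclusion of every subderivation) has level `≤ k`. -/
inductive MDerB (k : ℕ) : Sequent → Prop
  | ax (Γ : Sequent) (i : ℕ) :
      SeqLevLE k (insert (Form.atom i) (insert (Form.natom i) Γ)) →
      MDerB k (insert (Form.atom i) (insert (Form.natom i) Γ))
  | axMu (Γ : Sequent) (A : Form) :
      SeqLevLE k (insert (Form.mu A) (insert (Form.compl (Form.mu A)) Γ)) →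
      MDerB k (insert (Form.mu A) (insert (Form.compl (Form.mu A)) Γ))
  | orR (Γ : Sequent) (A B : Form) :
      SeqLevLE k (insert (Form.or A B) Γ) →
      MDerB k (insert A (insert B Γ)) → MDerB k (insert (Form.or A B) Γ)
  | andR (Γ : Sequent) (A B : Form) :
      SeqLevLE k (insert (Form.and A B) Γ) →
      MDerB k (insert A Γ) → MDerB k (insert B Γ) → MDerB k (insert (Form.and A B) Γ)
  | boxR (Γ S : Sequent) (A : Form) :
      SeqLevLE k (Γ.image Form.dia ∪ insert (Form.box A) S) →
      MDerB k (insert A Γ) → MDerB k (Γ.image Form.dia ∪ insert (Form.box A) S)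
  | clo (Γ : Sequent) (A : Form) :
      SeqLevLE k (insert (Form.mu A) Γ) →
      MDerB k (insert (Form.subst A (Form.mu A)) Γ) → MDerB k (insert (Form.mu A) Γ)
  | ind (A B : Form) :
      SeqLevLE k (insert (Form.compl (Form.mu A)) {B}) →
      MDerB k (insert (Form.compl (Form.subst A B)) {B}) →
      MDerB k (insert (Form.compl (Form.mu A)) {B})
  | cut (Γ : Sequent) (A : Form) :
      A.IsL0 → A.ClosedF → SeqLevLE k Γ →
      MDerB k (insert A Γ) → MDerB k (insert (Form.compl A) Γ) → MDerB k Γ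

/-- Derivations of the system `M^Ω_k`, relative to a predicate `prev` expressing
cut-free derivability in `M^Ω_{k-1}`.  The boolean index is `true` if instances
of cut are allowed and `false` for cut-free derivations. -/
inductive OmDerAux (prev : Sequent → Prop) (k : ℕ) : Bool → Sequent → Prop
  | ax (c : Bool) (Γ : Sequent) (i : ℕ) :
      OmDerAux prev k c (insert (Form.atom i) (insert (Form.natom i) Γ))
  | orR (c : Bool) (Γ : Sequent) (A B : Form) :
      OmDerAux prev k c (insert A (insert B Γ)) →
      OmDerAux prev k c (insert (Form.or A B) Γ)
  | andR (c : Bool) (Γ : Sequent) (A B : Form) :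
      OmDerAux prev k c (insert A Γ) → OmDerAux prev k c (insert B Γ) →
      OmDerAux prev k c (insert (Form.and A B) Γ)
  | boxR (c : Bool) (Γ S : Sequent) (A : Form) :
      OmDerAux prev k c (insert A Γ) →
      OmDerAux prev k c (Γ.image Form.dia ∪ insert (Form.box A) S)
  | clo (c : Bool) (Γ : Sequent) (A : Form) :
      OmDerAux prev k c (insert (Form.subst A (Form.mu A)) Γ) →
      OmDerAux prev k c (insert (Form.mu A) Γ)
  | nuR (c : Bool) (Γ : Sequent) (A : Form) :
      (∀ i : ℕ, OmDerAux prev k c (insert (Form.iter A i) Γ)) →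
      OmDerAux prev k c (insert (Form.nu A) Γ)
  | cut (Γ : Sequent) (A : Form) :
      A.IsL0 → A.ClosedF → A.lev ≤ k →
      OmDerAux prev k true (insert (Form.prime A) Γ) →
      OmDerAux prev k true (insert (Form.prime (Form.compl A)) Γ) →
      OmDerAux prev k true Γ
  | omega (c : Bool) (Γ : Sequent) (A : Form) (h : ℕ) :
      1 ≤ h → h ≤ k → A.IsL0 →
      Form.lev (Form.prime (Form.compl (Form.mu A))) = h →
      (∀ Δ : Sequent, ClosedSeq Δ → Positive h Δ →
        prev (insert (Form.prime (Form.mu A)) Δ) → OmDerAux prev k c (Δ ∪ Γ)) →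
      OmDerAux prev k c (insert (Form.prime (Form.compl (Form.mu A))) Γ)
  | omegaT (c : Bool) (Γ : Sequent) (A : Form) (h : ℕ) :
      1 ≤ h → h ≤ k → A.IsL0 →
      Form.lev (Form.prime (Form.compl (Form.mu A))) = h →
      OmDerAux prev k c (insert (Form.prime (Form.mu A)) Γ) →
      (∀ Δ : Sequent, ClosedSeq Δ → Positive h Δ →
        prev (insert (Form.prime (Form.mu A)) Δ) → OmDerAux prev k c (Δ ∪ Γ)) →
      OmDerAux prev k c Γ

/-- `OmProv k c Γ`: the sequent `Γ` is derivable in `M^Ω_k`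
(cut-free when `c = false`). -/
def OmProv : ℕ → Bool → Sequent → Prop
  | 0     => OmDerAux (fun _ => False) 0
  | k + 1 => OmDerAux (fun Δ => OmProv k false Δ) (k + 1)


-- ===== new material =====
namespace Form

lemma closedF_subst (A B : Form) (hB : B.ClosedF) : (A.subst B).ClosedF := by
  induction A <;> simp_all [subst, ClosedF]

lemma subst_of_closed (A B : Form) (hA : A.ClosedF) : A.subst B = A := by
  induction A <;> simp_all [subst, ClosedF]

lemma isL0_subst (A B : Form) (hA : A.IsL0) (hB : B.IsL0) : (A.subst B).IsL0 := by
  induction A <;> simp_all [subst, IsL0]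

lemma closedF_compl (A : Form) (hA : A.ClosedF) : A.compl.ClosedF := by
  induction A <;> simp_all [compl, ClosedF]

lemma closedF_top : ClosedF top := by simp [top, ClosedF]
lemma isL0_top : IsL0 top := by simp [top, IsL0]

lemma closedF_iter (A : Form) (i : ℕ) : (iter A i).ClosedF := by
  induction i with
  | zero => exact closedF_top
  | succ n ih => exact closedF_subst _ _ ih

lemma isL0_iter (A : Form) (hA : A.IsL0) (i : ℕ) : (iter A i).IsL0 := by
  induction i with
  | zero => exact isL0_top
  | succ n ih => exact isL0_subst _ _ hA ih

lemma lev_subst (A B : Form) : (A.subst B).lev ≤ max A.lev B.lev := by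
  induction A <;> simp_all [subst, lev] <;> omega

lemma lev_iter (A : Form) (i : ℕ) : (iter A i).lev ≤ A.lev := by
  induction i with
  | zero => simp [iter, top, lev]
  | succ n ih =>
      have := lev_subst A (iter A n)
      simp only [iter]; omega

/-- subterms -/
def Sub : Form → Finset Form
  | atom i => {atom i}
  | natom i => {natom i}
  | var => {var}
  | and A B => insert (and A B) (Sub A ∪ Sub B)
  | or A B => insert (or A B) (Sub A ∪ Sub B)
  | box A => insert (box A) (Sub A)
  | dia A => insert (dia A) (Sub A)
  | mu A => insert (mu A) (Sub A)
  | nu A => insert (nu A) (Sub A)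
  | nut A => insert (nut A) (Sub A)

lemma mem_Sub_self (A : Form) : A ∈ Sub A := by cases A <;> simp [Sub]

lemma Sub_trans {B A : Form} (h : B ∈ Sub A) : Sub B ⊆ Sub A := by
  induction A with
  | atom i => simp [Sub] at h; subst h; rfl
  | natom i => simp [Sub] at h; subst h; rfl
  | var => simp [Sub] at h; subst h; rfl
  | and A1 A2 ih1 ih2 =>
      simp only [Sub, Finset.mem_insert, Finset.mem_union] at h
      rcases h with h | h | h
      · subst h; rfl
      · exact (ih1 h).trans (by intro x hx; simp [Sub, Finset.mem_union]; tauto)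
      · exact (ih2 h).trans (by intro x hx; simp [Sub, Finset.mem_union]; tauto)
  | or A1 A2 ih1 ih2 =>
      simp only [Sub, Finset.mem_insert, Finset.mem_union] at h
      rcases h with h | h | h
      · subst h; rfl
      · exact (ih1 h).trans (by intro x hx; simp [Sub, Finset.mem_union]; tauto)
      · exact (ih2 h).trans (by intro x hx; simp [Sub, Finset.mem_union]; tauto)
  | box A ih =>
      simp only [Sub, Finset.mem_insert] at h
      rcases h with h | h
      · subst h; rfl
      · exact (ih h).trans (by intro x hx; simp [Sub]; tauto)
  | dia A ih =>
      simp only [Sub, Finset.mem_insert] at h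
      rcases h with h | h
      · subst h; rfl
      · exact (ih h).trans (by intro x hx; simp [Sub]; tauto)
  | mu A ih =>
      simp only [Sub, Finset.mem_insert] at h
      rcases h with h | h
      · subst h; rfl
      · exact (ih h).trans (by intro x hx; simp [Sub]; tauto)
  | nu A ih =>
      simp only [Sub, Finset.mem_insert] at h
      rcases h with h | h
      · subst h; rfl
      · exact (ih h).trans (by intro x hx; simp [Sub]; tauto)
  | nut A ih =>
      simp only [Sub, Finset.mem_insert] at h
      rcases h with h | h
      · subst h; rfl
      · exact (ih h).trans (by intro x hx; simp [Sub]; tauto)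

lemma lev_le_of_mem_Sub {B A : Form} (h : B ∈ Sub A) : B.lev ≤ A.lev := by
  induction A with
  | atom i => simp [Sub] at h; subst h; rfl
  | natom i => simp [Sub] at h; subst h; rfl
  | var => simp [Sub] at h; subst h; rfl
  | and A1 A2 ih1 ih2 =>
      simp only [Sub, Finset.mem_insert, Finset.mem_union] at h
      rcases h with h | h | h
      · subst h; rfl
      · exact le_trans (ih1 h) (by simp [lev])
      · exact le_trans (ih2 h) (by simp [lev])
  | or A1 A2 ih1 ih2 =>
      simp only [Sub, Finset.mem_insert, Finset.mem_union] at h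
      rcases h with h | h | h
      · subst h; rfl
      · exact le_trans (ih1 h) (by simp [lev])
      · exact le_trans (ih2 h) (by simp [lev])
  | box A ih =>
      simp only [Sub, Finset.mem_insert] at h
      rcases h with h | h
      · subst h; rfl
      · exact le_trans (ih h) (by simp [lev])
  | dia A ih =>
      simp only [Sub, Finset.mem_insert] at h
      rcases h with h | h
      · subst h; rfl
      · exact le_trans (ih h) (by simp [lev])
  | mu A ih =>
      simp only [Sub, Finset.mem_insert] at h
      rcases h with h | h
      · subst h; rfl
      · exact le_trans (ih h) (by simp [lev])
  | nu A ih =>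
      simp only [Sub, Finset.mem_insert] at h
      rcases h with h | h
      · subst h; rfl
      · exact le_trans (ih h) (by simp [lev])
  | nut A ih =>
      simp only [Sub, Finset.mem_insert] at h
      rcases h with h | h
      · subst h; rfl
      · exact le_trans (ih h) (by simp [lev])

lemma mem_Sub_subst {D C B : Form} (h : D ∈ Sub (subst C B)) :
    D ∈ Sub C ∨ (∃ C' ∈ Sub C, D = subst C' B) ∨ D ∈ Sub B := by
  induction C with
  | atom i => simp [subst] at h ⊢; tauto
  | natom i => simp [subst] at h ⊢; tauto
  | var => simp [subst] at h; tauto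
  | and C1 C2 ih1 ih2 =>
      simp only [subst, Sub, Finset.mem_insert, Finset.mem_union] at h
      rcases h with h | h | h
      · right; left; exact ⟨and C1 C2, mem_Sub_self _, h⟩
      · rcases ih1 h with h' | ⟨C', hC', rfl⟩ | h'
        · left; simp [Sub, Finset.mem_union]; tauto
        · right; left; exact ⟨C', by simp [Sub, Finset.mem_union]; tauto, rfl⟩
        · tauto
      · rcases ih2 h with h' | ⟨C', hC', rfl⟩ | h'
        · left; simp [Sub, Finset.mem_union]; tauto
        · right; left; exact ⟨C', by simp [Sub, Finset.mem_union]; tauto, rfl⟩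
        · tauto
  | or C1 C2 ih1 ih2 =>
      simp only [subst, Sub, Finset.mem_insert, Finset.mem_union] at h
      rcases h with h | h | h
      · right; left; exact ⟨or C1 C2, mem_Sub_self _, h⟩
      · rcases ih1 h with h' | ⟨C', hC', rfl⟩ | h'
        · left; simp [Sub, Finset.mem_union]; tauto
        · right; left; exact ⟨C', by simp [Sub, Finset.mem_union]; tauto, rfl⟩
        · tauto
      · rcases ih2 h with h' | ⟨C', hC', rfl⟩ | h'
        · left; simp [Sub, Finset.mem_union]; tauto
        · right; left; exact ⟨C', by simp [Sub, Finset.mem_union]; tauto, rfl⟩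
        · tauto
  | box C ih =>
      simp only [subst, Sub, Finset.mem_insert] at h
      rcases h with h | h
      · right; left; exact ⟨box C, mem_Sub_self _, h⟩
      · rcases ih h with h' | ⟨C', hC', rfl⟩ | h'
        · left; simp [Sub]; tauto
        · right; left; exact ⟨C', by simp [Sub]; tauto, rfl⟩
        · tauto
  | dia C ih =>
      simp only [subst, Sub, Finset.mem_insert] at h
      rcases h with h | h
      · right; left; exact ⟨dia C, mem_Sub_self _, h⟩
      · rcases ih h with h' | ⟨C', hC', rfl⟩ | h'
        · left; simp [Sub]; tauto
        · right; left; exact ⟨C', by simp [Sub]; tauto, rfl⟩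
        · tauto
  | mu C ih => simp only [subst] at h; tauto
  | nu C ih => simp only [subst] at h; tauto
  | nut C ih => simp only [subst] at h; tauto

lemma nu_mem_Sub_subst {E C B : Form} (h : nu E ∈ Sub (subst C B)) :
    nu E ∈ Sub C ∨ nu E ∈ Sub B := by
  rcases mem_Sub_subst h with h' | ⟨C', hC', hE⟩ | h'
  · exact Or.inl h'
  · cases C' with
    | var =>
        simp only [subst] at hE
        exact Or.inr (hE ▸ mem_Sub_self _)
    | nu C'' =>
        simp only [subst] at hE
        injection hE with h1; subst h1; exact Or.inl hC'
    | atom i => simp [subst] at hE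
    | natom i => simp [subst] at hE
    | and C1 C2 => simp [subst] at hE
    | or C1 C2 => simp [subst] at hE
    | box C1 => simp [subst] at hE
    | dia C1 => simp [subst] at hE
    | mu C1 => simp [subst] at hE
    | nut C1 => simp [subst] at hE
  · exact Or.inr h'

lemma nu_mem_Sub_iter {E A : Form} (i : ℕ) (h : nu E ∈ Sub (iter A i)) :
    nu E ∈ Sub A := by
  induction i with
  | zero => simp [iter, top, Sub] at h
  | succ n ih =>
      simp only [iter] at h
      rcases nu_mem_Sub_subst h with h' | h'
      · exact h'
      · exact ih h'

end Form
open Form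

theorem KDer.weak {Γ : Sequent} (h : KDer Γ) : ∀ {Δ : Sequent}, Γ ⊆ Δ → KDer Δ := by
  induction h with
  | ax Γ i =>
      intro Δ hsub
      have h1 : Form.atom i ∈ Δ := hsub (by simp)
      have h2 : Form.natom i ∈ Δ := hsub (by simp)
      have := KDer.ax Δ i
      rwa [Finset.insert_eq_self.mpr h2, Finset.insert_eq_self.mpr h1] at this
  | orR Γ A B hpre ih =>
      intro Δ hsub
      have hΓ : Γ ⊆ Δ := (Finset.subset_insert _ _).trans hsub
      have hm : Form.or A B ∈ Δ := hsub (by simp)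
      have := KDer.orR Δ A B (ih (Finset.insert_subset_insert _ (Finset.insert_subset_insert _ hΓ)))
      rwa [Finset.insert_eq_self.mpr hm] at this
  | andR Γ A B h1 h2 ih1 ih2 =>
      intro Δ hsub
      have hΓ : Γ ⊆ Δ := (Finset.subset_insert _ _).trans hsub
      have hm : Form.and A B ∈ Δ := hsub (by simp)
      have := KDer.andR Δ A B (ih1 (Finset.insert_subset_insert _ hΓ))
        (ih2 (Finset.insert_subset_insert _ hΓ))
      rwa [Finset.insert_eq_self.mpr hm] at this
  | boxR Γ S A hpre ih =>
      intro Δ hsub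
      have h1 : Γ.image Form.dia ⊆ Δ := (Finset.subset_union_left).trans hsub
      have h2 : Form.box A ∈ Δ := hsub (by simp)
      have := KDer.boxR Γ Δ A hpre
      have heq : Γ.image Form.dia ∪ insert (Form.box A) Δ = Δ := by
        apply Finset.Subset.antisymm
        · exact Finset.union_subset h1 (Finset.insert_subset h2 (le_refl _))
        · exact (Finset.subset_insert _ _).trans Finset.subset_union_right
      rwa [heq] at this
  | clo Γ A hpre ih =>
      intro Δ hsub
      have hΓ : Γ ⊆ Δ := (Finset.subset_insert _ _).trans hsub
      have hm : Form.mu A ∈ Δ := hsub (by simp)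
      have := KDer.clo Δ A (ih (Finset.insert_subset_insert _ hΓ))
      rwa [Finset.insert_eq_self.mpr hm] at this
  | nuR Γ A hpre ih =>
      intro Δ hsub
      have hΓ : Γ ⊆ Δ := (Finset.subset_insert _ _).trans hsub
      have hm : Form.nu A ∈ Δ := hsub (by simp)
      have := KDer.nuR Δ A (fun i => ih i (Finset.insert_subset_insert _ hΓ))
      rwa [Finset.insert_eq_self.mpr hm] at this

-- ===== saturation =====
def Good (C : Form) : Prop := C.IsL0 ∧ C.ClosedF

open Form in
lemma good_or {A B : Form} (h : Good (Form.or A B)) : Good A ∧ Good B := by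
  obtain ⟨h1, h2⟩ := h
  simp [IsL0, ClosedF] at h1 h2
  exact ⟨⟨h1.1, h2.1⟩, ⟨h1.2, h2.2⟩⟩

open Form in
lemma good_and {A B : Form} (h : Good (Form.and A B)) : Good A ∧ Good B := by
  obtain ⟨h1, h2⟩ := h
  simp [IsL0, ClosedF] at h1 h2
  exact ⟨⟨h1.1, h2.1⟩, ⟨h1.2, h2.2⟩⟩

open Form in
lemma good_box {A : Form} (h : Good (Form.box A)) : Good A := by
  obtain ⟨h1, h2⟩ := h; exact ⟨h1, h2⟩

open Form in
lemma good_dia {A : Form} (h : Good (Form.dia A)) : Good A := by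
  obtain ⟨h1, h2⟩ := h; exact ⟨h1, h2⟩

open Form in
lemma good_mu_subst {A : Form} (h : Good (Form.mu A)) : Good (Form.subst A (Form.mu A)) := by
  obtain ⟨h1, _⟩ := h
  exact ⟨isL0_subst _ _ h1 h1, closedF_subst _ _ trivial⟩

open Form in
lemma good_nu_iter {A : Form} (h : Good (Form.nu A)) (i : ℕ) : Good (Form.iter A i) := by
  obtain ⟨h1, _⟩ := h
  exact ⟨isL0_iter A h1 i, closedF_iter _ i⟩

def PreSat (Δ : Sequent) : Prop :=
  (∀ A B : Form, Form.or A B ∈ Δ → A ∈ Δ ∧ B ∈ Δ) ∧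
  (∀ A B : Form, Form.and A B ∈ Δ → A ∈ Δ ∨ B ∈ Δ) ∧
  (∀ A : Form, Form.mu A ∈ Δ → Form.subst A (Form.mu A) ∈ Δ)

def Sat (Δ : Sequent) : Prop :=
  PreSat Δ ∧ (∀ A : Form, Form.nu A ∈ Δ → ∃ i, Form.iter A i ∈ Δ)

/-- subterm closure of a sequent -/
def CLS (Γ : Sequent) : Sequent := Γ.biUnion Form.Sub

def isMuB : Form → Bool
  | Form.mu _ => true
  | _ => false

def Mus (Γ : Sequent) : Sequent := (CLS Γ).filter (fun C => isMuB C = true)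

def CL (Γ : Sequent) : Sequent :=
  CLS Γ ∪ ((CLS Γ) ×ˢ (Mus Γ)).image (fun p => Form.subst p.1 p.2)

lemma subset_CLS (Γ : Sequent) : Γ ⊆ CLS Γ := by
  intro C hC; exact Finset.mem_biUnion.mpr ⟨C, hC, Form.mem_Sub_self C⟩

lemma CLS_closed {Γ : Sequent} {C : Form} (h : C ∈ CLS Γ) : Form.Sub C ⊆ CLS Γ := by
  obtain ⟨D, hD, hCD⟩ := Finset.mem_biUnion.mp h
  intro x hx
  exact Finset.mem_biUnion.mpr ⟨D, hD, Form.Sub_trans hCD hx⟩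

lemma subset_CL (Γ : Sequent) : Γ ⊆ CL Γ := (subset_CLS Γ).trans Finset.subset_union_left

lemma mem_CL_iff {Γ : Sequent} {C : Form} :
    C ∈ CL Γ ↔ C ∈ CLS Γ ∨ ∃ C' m, C' ∈ CLS Γ ∧ m ∈ Mus Γ ∧ C = Form.subst C' m := by
  simp only [CL, Finset.mem_union, Finset.mem_image, Finset.mem_product, Prod.exists]
  constructor
  · rintro (h | ⟨a, b, ⟨h1, h2⟩, h3⟩)
    · exact Or.inl h
    · exact Or.inr ⟨a, b, h1, h2, h3.symm⟩
  · rintro (h | ⟨a, b, h1, h2, h3⟩)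
    · exact Or.inl h
    · exact Or.inr ⟨a, b, ⟨h1, h2⟩, h3.symm⟩

lemma mus_spec {Γ : Sequent} {m : Form} (h : m ∈ Mus Γ) :
    (∃ D, m = Form.mu D) ∧ m ∈ CLS Γ := by
  obtain ⟨h1, h2⟩ := Finset.mem_filter.mp h
  refine ⟨?_, h1⟩
  cases m <;> simp [isMuB] at h2 <;> exact ⟨_, rfl⟩

lemma CL_or {Γ : Sequent} {A B : Form} (h : Form.or A B ∈ CL Γ) :
    A ∈ CL Γ ∧ B ∈ CL Γ := by
  rcases mem_CL_iff.mp h with h | ⟨C', m, hC', hm, heq⟩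
  · constructor <;> apply Finset.mem_union_left <;> apply CLS_closed h <;>
      simp [Form.Sub, Finset.mem_union, Form.mem_Sub_self]
  · obtain ⟨⟨D, rfl⟩, hmC⟩ := mus_spec hm
    cases C' <;> simp [Form.subst] at heq
    case or C1 C2 =>
      obtain ⟨rfl, rfl⟩ := heq
      have h1 : C1 ∈ CLS Γ := CLS_closed hC' (by simp [Form.Sub, Form.mem_Sub_self])
      have h2 : C2 ∈ CLS Γ := CLS_closed hC' (by simp [Form.Sub, Form.mem_Sub_self])
      constructor <;> apply Finset.mem_union_right <;> apply Finset.mem_image.mpr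
      · exact ⟨(C1, Form.mu D), by simp [Finset.mem_product, h1, hm]⟩
      · exact ⟨(C2, Form.mu D), by simp [Finset.mem_product, h2, hm]⟩

lemma CL_and {Γ : Sequent} {A B : Form} (h : Form.and A B ∈ CL Γ) :
    A ∈ CL Γ ∧ B ∈ CL Γ := by
  rcases mem_CL_iff.mp h with h | ⟨C', m, hC', hm, heq⟩
  · constructor <;> apply Finset.mem_union_left <;> apply CLS_closed h <;>
      simp [Form.Sub, Finset.mem_union, Form.mem_Sub_self]
  · obtain ⟨⟨D, rfl⟩, hmC⟩ := mus_spec hm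
    cases C' <;> simp [Form.subst] at heq
    case and C1 C2 =>
      obtain ⟨rfl, rfl⟩ := heq
      have h1 : C1 ∈ CLS Γ := CLS_closed hC' (by simp [Form.Sub, Form.mem_Sub_self])
      have h2 : C2 ∈ CLS Γ := CLS_closed hC' (by simp [Form.Sub, Form.mem_Sub_self])
      constructor <;> apply Finset.mem_union_right <;> apply Finset.mem_image.mpr
      · exact ⟨(C1, Form.mu D), by simp [Finset.mem_product, h1, hm]⟩
      · exact ⟨(C2, Form.mu D), by simp [Finset.mem_product, h2, hm]⟩

lemma CL_mu {Γ : Sequent} {A : Form} (h : Form.mu A ∈ CL Γ) :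
    Form.subst A (Form.mu A) ∈ CL Γ := by
  have hmem : Form.mu A ∈ CLS Γ := by
    rcases mem_CL_iff.mp h with h | ⟨C', m, hC', hm, heq⟩
    · exact h
    · obtain ⟨⟨D, rfl⟩, hmC⟩ := mus_spec hm
      cases C' <;> simp [Form.subst] at heq
      · obtain rfl := heq; exact hmC
      · obtain ⟨rfl, rfl⟩ := heq; exact hC'
  have hA : A ∈ CLS Γ := CLS_closed hmem (by simp [Form.Sub, Form.mem_Sub_self])
  have hmu : Form.mu A ∈ Mus Γ := Finset.mem_filter.mpr ⟨hmem, by simp [isMuB]⟩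
  exact Finset.mem_union_right _ (Finset.mem_image.mpr
    ⟨(A, Form.mu A), by simp [Finset.mem_product, hA, hmu]⟩)

lemma CL_nu {Γ : Sequent} {A : Form} (h : Form.nu A ∈ CL Γ) : Form.nu A ∈ CLS Γ := by
  rcases mem_CL_iff.mp h with h | ⟨C', m, hC', hm, heq⟩
  · exact h
  · obtain ⟨⟨D, rfl⟩, hmC⟩ := mus_spec hm
    cases C' <;> simp [Form.subst] at heq
    obtain ⟨rfl, rfl⟩ := heq; exact hC'

lemma card_sdiff_lt {U Γ Γ' : Sequent} (h1 : Γ ⊆ Γ') (h2 : Γ' ⊆ U) (x : Form)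
    (hx : x ∈ Γ') (hxn : x ∉ Γ) : (U \ Γ').card < (U \ Γ).card := by
  apply Finset.card_lt_card
  rw [Finset.ssubset_def]
  constructor
  · intro y hy
    rw [Finset.mem_sdiff] at hy ⊢
    exact ⟨hy.1, fun hc => hy.2 (h1 hc)⟩
  · intro hsub
    have hmem : x ∈ U \ Γ := Finset.mem_sdiff.mpr ⟨h2 hx, hxn⟩
    have := hsub hmem
    rw [Finset.mem_sdiff] at this
    exact this.2 hx

theorem presat (U Γ₀ : Sequent)
    (hor : ∀ A B : Form, Form.or A B ∈ U → (A ∈ U ∧ B ∈ U) ∨ (A ∈ Γ₀ ∧ B ∈ Γ₀))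
    (hand : ∀ A B : Form, Form.and A B ∈ U → (A ∈ U ∧ B ∈ U) ∨ A ∈ Γ₀ ∨ B ∈ Γ₀)
    (hmu : ∀ A : Form, Form.mu A ∈ U →
      Form.subst A (Form.mu A) ∈ U ∨ Form.subst A (Form.mu A) ∈ Γ₀) :
    ∀ (n : ℕ) (Γ : Sequent), (U \ Γ).card ≤ n → Γ₀ ⊆ Γ → Γ ⊆ U → ¬ KDer Γ →
      (∀ C ∈ Γ, Good C) →
      ∃ Δ, Γ ⊆ Δ ∧ Δ ⊆ U ∧ ¬ KDer Δ ∧ PreSat Δ ∧ (∀ C ∈ Δ, Good C) := by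
  intro n
  induction n using Nat.strong_induction_on with
  | _ n ih =>
  intro Γ hcard h0 hU hnd hG
  by_cases c1 : ∀ A B : Form, Form.or A B ∈ Γ → A ∈ Γ ∧ B ∈ Γ
  · by_cases c2 : ∀ A B : Form, Form.and A B ∈ Γ → A ∈ Γ ∨ B ∈ Γ
    · by_cases c3 : ∀ A : Form, Form.mu A ∈ Γ → Form.subst A (Form.mu A) ∈ Γ
      · exact ⟨Γ, le_refl _, hU, hnd, ⟨c1, c2, c3⟩, hG⟩
      · -- mu violation
        push_neg at c3; obtain ⟨A, hA, hAn⟩ := c3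
        have hsub : Form.subst A (Form.mu A) ∈ U := by
          rcases hmu A (hU hA) with h | h
          · exact h
          · exact absurd (h0 h) hAn
        set Γ' := insert (Form.subst A (Form.mu A)) Γ with hΓ'
        have h1 : Γ ⊆ Γ' := Finset.subset_insert _ _
        have h2 : Γ' ⊆ U := Finset.insert_subset hsub hU
        have hlt : (U \ Γ').card < (U \ Γ).card :=
          card_sdiff_lt h1 h2 _ (Finset.mem_insert_self _ _) hAn
        have hnd' : ¬ KDer Γ' := fun h => hnd (by
          have := KDer.clo Γ A h
          rwa [Finset.insert_eq_self.mpr hA] at this)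
        have hG' : ∀ C ∈ Γ', Good C := by
          intro C hC; rcases Finset.mem_insert.mp hC with rfl | hC
          · exact good_mu_subst (hG _ hA)
          · exact hG _ hC
        obtain ⟨Δ, hs1, hs2, hs3, hs4, hs5⟩ :=
          ih _ (lt_of_lt_of_le hlt hcard) Γ' (le_refl _) (h0.trans h1) h2 hnd' hG'
        exact ⟨Δ, h1.trans hs1, hs2, hs3, hs4, hs5⟩
    · -- and violation
      push_neg at c2; obtain ⟨A, B, hA, hAn, hBn⟩ := c2
      have hAB : A ∈ U ∧ B ∈ U := by
        rcases hand A B (hU hA) with h | h | h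
        · exact h
        · exact absurd (h0 h) hAn
        · exact absurd (h0 h) hBn
      have hch : ¬ KDer (insert A Γ) ∨ ¬ KDer (insert B Γ) := by
        by_contra h; push_neg at h
        refine hnd ?_
        have := KDer.andR Γ A B h.1 h.2
        rwa [Finset.insert_eq_self.mpr hA] at this
      rcases hch with hnd' | hnd'
      · set Γ' := insert A Γ with hΓ'
        have h1 : Γ ⊆ Γ' := Finset.subset_insert _ _
        have h2 : Γ' ⊆ U := Finset.insert_subset hAB.1 hU
        have hlt : (U \ Γ').card < (U \ Γ).card :=
          card_sdiff_lt h1 h2 _ (Finset.mem_insert_self _ _) hAn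
        have hG' : ∀ C ∈ Γ', Good C := by
          intro C hC; rcases Finset.mem_insert.mp hC with rfl | hC
          · exact (good_and (hG _ hA)).1
          · exact hG _ hC
        obtain ⟨Δ, hs1, hs2, hs3, hs4, hs5⟩ :=
          ih _ (lt_of_lt_of_le hlt hcard) Γ' (le_refl _) (h0.trans h1) h2 hnd' hG'
        exact ⟨Δ, h1.trans hs1, hs2, hs3, hs4, hs5⟩
      · set Γ' := insert B Γ with hΓ'
        have h1 : Γ ⊆ Γ' := Finset.subset_insert _ _
        have h2 : Γ' ⊆ U := Finset.insert_subset hAB.2 hU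
        have hlt : (U \ Γ').card < (U \ Γ).card :=
          card_sdiff_lt h1 h2 _ (Finset.mem_insert_self _ _) hBn
        have hG' : ∀ C ∈ Γ', Good C := by
          intro C hC; rcases Finset.mem_insert.mp hC with rfl | hC
          · exact (good_and (hG _ hA)).2
          · exact hG _ hC
        obtain ⟨Δ, hs1, hs2, hs3, hs4, hs5⟩ :=
          ih _ (lt_of_lt_of_le hlt hcard) Γ' (le_refl _) (h0.trans h1) h2 hnd' hG'
        exact ⟨Δ, h1.trans hs1, hs2, hs3, hs4, hs5⟩
  · -- or violation
    push_neg at c1; obtain ⟨A, B, hA, hABn⟩ := c1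
    have hAB : A ∈ U ∧ B ∈ U := by
      rcases hor A B (hU hA) with h | h
      · exact h
      · exact absurd (h0 h.2) (hABn (h0 h.1))
    set Γ' := insert A (insert B Γ) with hΓ'
    have h1 : Γ ⊆ Γ' := (Finset.subset_insert _ _).trans (Finset.subset_insert _ _)
    have h2 : Γ' ⊆ U := Finset.insert_subset hAB.1 (Finset.insert_subset hAB.2 hU)
    have hwit : ∃ x, x ∈ Γ' ∧ x ∉ Γ := by
      by_cases hAi : A ∈ Γ
      · by_cases hBi : B ∈ Γ
        · exact absurd hBi (hABn hAi)
        · exact ⟨B, Finset.mem_insert_of_mem (Finset.mem_insert_self _ _), hBi⟩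
      · exact ⟨A, Finset.mem_insert_self _ _, hAi⟩
    obtain ⟨x, hx1, hx2⟩ := hwit
    have hlt : (U \ Γ').card < (U \ Γ).card := card_sdiff_lt h1 h2 x hx1 hx2
    have hnd' : ¬ KDer Γ' := fun h => hnd (by
      have := KDer.orR Γ A B h
      rwa [Finset.insert_eq_self.mpr hA] at this)
    have hG' : ∀ C ∈ Γ', Good C := by
      intro C hC; rcases Finset.mem_insert.mp hC with rfl | hC
      · exact (good_or (hG _ hA)).1
      · rcases Finset.mem_insert.mp hC with rfl | hC
        · exact (good_or (hG _ hA)).2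
        · exact hG _ hC
    obtain ⟨Δ, hs1, hs2, hs3, hs4, hs5⟩ :=
      ih _ (lt_of_lt_of_le hlt hcard) Γ' (le_refl _) (h0.trans h1) h2 hnd' hG'
    exact ⟨Δ, h1.trans hs1, hs2, hs3, hs4, hs5⟩

theorem nuadd : ∀ (l : List Form) (Δ : Sequent), ¬ KDer Δ →
    (∀ C ∈ l, C ∈ Δ) →
    ∃ E : Sequent, ¬ KDer (Δ ∪ E) ∧
      (∀ A : Form, Form.nu A ∈ l → ∃ i, Form.iter A i ∈ E) ∧
      (∀ e ∈ E, ∃ A i, Form.nu A ∈ l ∧ e = Form.iter A i) := by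
  intro l
  induction l with
  | nil =>
      intro Δ h _
      exact ⟨∅, by rw [Finset.union_empty]; exact h, by simp, by simp⟩
  | cons C rest ih =>
      intro Δ hΔ hmem
      obtain ⟨E, hE1, hE2, hE3⟩ := ih Δ hΔ (fun C h => hmem C (List.mem_cons_of_mem _ h))
      by_cases hC : ∃ A, C = Form.nu A
      · obtain ⟨A, rfl⟩ := hC
        have hex : ∃ i, ¬ KDer (insert (Form.iter A i) (Δ ∪ E)) := by
          by_contra hall; push_neg at hall
          have hder := KDer.nuR (Δ ∪ E) A hall
          have hnu : Form.nu A ∈ Δ ∪ E :=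
            Finset.mem_union_left _ (hmem _ (List.mem_cons_self))
          rw [Finset.insert_eq_self.mpr hnu] at hder
          exact hE1 hder
        obtain ⟨i, hi⟩ := hex
        refine ⟨insert (Form.iter A i) E, ?_, ?_, ?_⟩
        · intro h; apply hi
          rwa [Finset.union_insert] at h
        · intro A' hA'
          rcases List.mem_cons.mp hA' with heq | hmem'
          · injection heq with h'; subst h'
            exact ⟨i, Finset.mem_insert_self _ _⟩
          · obtain ⟨i', hi'⟩ := hE2 A' hmem'
            exact ⟨i', Finset.mem_insert_of_mem hi'⟩
        · intro e he
          rcases Finset.mem_insert.mp he with rfl | he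
          · exact ⟨A, i, List.mem_cons_self, rfl⟩
          · obtain ⟨A', i', h1, h2⟩ := hE3 e he
            exact ⟨A', i', List.mem_cons_of_mem _ h1, h2⟩
      · refine ⟨E, hE1, ?_, ?_⟩
        · intro A hA
          rcases List.mem_cons.mp hA with heq | hmem'
          · exact absurd ⟨A, heq.symm⟩ hC
          · exact hE2 A hmem'
        · intro e he
          obtain ⟨A, i, h1, h2⟩ := hE3 e he
          exact ⟨A, i, List.mem_cons_of_mem _ h1, h2⟩

theorem nsat : ∀ (L : ℕ) (Γ F : Sequent),
    ¬ KDer (Γ ∪ F) →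
    (∀ C ∈ Γ ∪ F, Good C) →
    (∀ C ∈ Γ, ∀ E : Form, Form.nu E ∈ Form.Sub C → (Form.nu E).lev ≤ L) →
    (∀ A B : Form, Form.or A B ∈ F → A ∈ Γ ∪ F ∧ B ∈ Γ ∪ F) →
    (∀ A B : Form, Form.and A B ∈ F → A ∈ Γ ∪ F ∨ B ∈ Γ ∪ F) →
    (∀ A : Form, Form.mu A ∈ F → Form.subst A (Form.mu A) ∈ Γ ∪ F) →
    (∀ A : Form, Form.nu A ∈ F → ∃ i, Form.iter A i ∈ Γ ∪ F) →
    ∃ Δ, Γ ∪ F ⊆ Δ ∧ ¬ KDer Δ ∧ Sat Δ ∧ (∀ C ∈ Δ, Good C) := by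
  intro L
  induction L using Nat.strong_induction_on with
  | _ L ihL =>
  intro Γ F hnd hG hlev hFor hFand hFmu hFnu
  classical
  set U := CL Γ ∪ F with hUdef
  have hΓU : Γ ∪ F ⊆ U := Finset.union_subset_union (subset_CL Γ) (le_refl F)
  have hor : ∀ A B : Form, Form.or A B ∈ U →
      (A ∈ U ∧ B ∈ U) ∨ (A ∈ Γ ∪ F ∧ B ∈ Γ ∪ F) := by
    intro A B hAB
    rcases Finset.mem_union.mp hAB with h | h
    · left
      have := CL_or h
      exact ⟨Finset.mem_union_left _ this.1, Finset.mem_union_left _ this.2⟩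
    · right; exact hFor A B h
  have hand : ∀ A B : Form, Form.and A B ∈ U →
      (A ∈ U ∧ B ∈ U) ∨ A ∈ Γ ∪ F ∨ B ∈ Γ ∪ F := by
    intro A B hAB
    rcases Finset.mem_union.mp hAB with h | h
    · left
      have := CL_and h
      exact ⟨Finset.mem_union_left _ this.1, Finset.mem_union_left _ this.2⟩
    · right; exact hFand A B h
  have hmu : ∀ A : Form, Form.mu A ∈ U →
      Form.subst A (Form.mu A) ∈ U ∨ Form.subst A (Form.mu A) ∈ Γ ∪ F := by
    intro A hA
    rcases Finset.mem_union.mp hA with h | h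
    · left; exact Finset.mem_union_left _ (CL_mu h)
    · right; exact hFmu A h
  obtain ⟨Δ1, hΔsub, hΔU, hΔnd, hΔpre, hΔG⟩ :=
    presat U (Γ ∪ F) hor hand hmu (U \ (Γ ∪ F)).card (Γ ∪ F) le_rfl (le_refl _) hΓU hnd hG
  set l := (Δ1.filter
      (fun C => ∀ E : Form, C = Form.nu E → ∀ i, Form.iter E i ∉ Δ1)).toList with hldef
  have hlmem : ∀ C ∈ l, C ∈ Δ1 := by
    intro C hC
    exact (Finset.mem_filter.mp (Finset.mem_toList.mp hC)).1
  obtain ⟨E, hE1, hE2, hE3⟩ := nuadd l Δ1 hΔnd hlmem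
  have hlnu : ∀ A : Form, Form.nu A ∈ l → (Form.nu A).lev ≤ L := by
    intro A hA
    have hfil := Finset.mem_filter.mp (Finset.mem_toList.mp hA)
    have hmem1 : Form.nu A ∈ Δ1 := hfil.1
    have hnof : Form.nu A ∉ F := by
      intro hF
      obtain ⟨i, hi⟩ := hFnu A hF
      exact hfil.2 A rfl i (hΔsub hi)
    have hCL : Form.nu A ∈ CL Γ := by
      rcases Finset.mem_union.mp (hΔU hmem1) with h | h
      · exact h
      · exact absurd h hnof
    obtain ⟨C, hC, hsub⟩ := Finset.mem_biUnion.mp (CL_nu hCL)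
    exact hlev C hC A hsub
  have hsatnu : ∀ A : Form, Form.nu A ∈ Δ1 → ∃ i, Form.iter A i ∈ Δ1 ∪ E := by
    intro A hA
    by_cases hin : ∀ i, Form.iter A i ∉ Δ1
    · have hmem : Form.nu A ∈ l := by
        apply Finset.mem_toList.mpr
        apply Finset.mem_filter.mpr
        refine ⟨hA, ?_⟩
        intro E' hE' i
        injection hE' with h'; subst h'
        exact hin i
      obtain ⟨i, hi⟩ := hE2 A hmem
      exact ⟨i, Finset.mem_union_right _ hi⟩
    · push_neg at hin
      obtain ⟨i, hi⟩ := hin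
      exact ⟨i, Finset.mem_union_left _ hi⟩
  have hGE : ∀ e ∈ E, Good e := by
    intro e he
    obtain ⟨A, i, hA, rfl⟩ := hE3 e he
    exact good_nu_iter (hΔG _ (hlmem _ hA)) i
  rcases L with _ | L'
  · -- L = 0 : no ν can be unsaturated
    have hEempty : E = ∅ := by
      rcases Finset.eq_empty_or_nonempty E with h | h
      · exact h
      · obtain ⟨e, he⟩ := h
        obtain ⟨A, i, hA, rfl⟩ := hE3 e he
        have := hlnu A hA
        simp [Form.lev] at this
    refine ⟨Δ1, hΔsub, hΔnd, ⟨hΔpre, ?_⟩, hΔG⟩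
    intro A hA
    have := hsatnu A hA
    rwa [hEempty, Finset.union_empty] at this
  · -- recurse at L'
    have hndE : ¬ KDer (E ∪ Δ1) := by rwa [Finset.union_comm]
    have hGE' : ∀ C ∈ E ∪ Δ1, Good C := by
      intro C hC
      rcases Finset.mem_union.mp hC with h | h
      · exact hGE _ h
      · exact hΔG _ h
    have hlevE : ∀ C ∈ E, ∀ Ef : Form, Form.nu Ef ∈ Form.Sub C → (Form.nu Ef).lev ≤ L' := by
      intro C hC Ef hEf
      obtain ⟨A, i, hA, rfl⟩ := hE3 C hC
      have h1 : Form.nu Ef ∈ Form.Sub A := Form.nu_mem_Sub_iter i hEf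
      have h2 : (Form.nu Ef).lev ≤ A.lev := Form.lev_le_of_mem_Sub h1
      have h3 := hlnu A hA
      simp only [Form.lev] at h2 h3 ⊢
      omega
    have p1 : ∀ A B : Form, Form.or A B ∈ Δ1 → A ∈ E ∪ Δ1 ∧ B ∈ E ∪ Δ1 := by
      intro A B h
      have := hΔpre.1 A B h
      exact ⟨Finset.mem_union_right _ this.1, Finset.mem_union_right _ this.2⟩
    have p2 : ∀ A B : Form, Form.and A B ∈ Δ1 → A ∈ E ∪ Δ1 ∨ B ∈ E ∪ Δ1 := by
      intro A B h
      rcases hΔpre.2.1 A B h with h' | h'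
      · exact Or.inl (Finset.mem_union_right _ h')
      · exact Or.inr (Finset.mem_union_right _ h')
    have p3 : ∀ A : Form, Form.mu A ∈ Δ1 → Form.subst A (Form.mu A) ∈ E ∪ Δ1 := by
      intro A h
      exact Finset.mem_union_right _ (hΔpre.2.2 A h)
    have p4 : ∀ A : Form, Form.nu A ∈ Δ1 → ∃ i, Form.iter A i ∈ E ∪ Δ1 := by
      intro A h
      obtain ⟨i, hi⟩ := hsatnu A h
      exact ⟨i, by rwa [Finset.union_comm]⟩
    obtain ⟨Δ, hh1, hh2, hh3, hh4⟩ :=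
      ihL L' (Nat.lt_succ_self L') E Δ1 hndE hGE' hlevE p1 p2 p3 p4
    refine ⟨Δ, ?_, hh2, hh3, hh4⟩
    exact hΔsub.trans ((Finset.subset_union_right).trans hh1)

-- ===== semantics =====
structure Kripke where
  W : Type
  R : W → W → Prop
  V : ℕ → Set W

def ev (M : Kripke) : Form → Set M.W → Set M.W
  | Form.atom i, _ => M.V i
  | Form.natom i, _ => (M.V i)ᶜ
  | Form.var, S => S
  | Form.and A B, S => ev M A S ∩ ev M B S
  | Form.or A B, S => ev M A S ∪ ev M B S
  | Form.box A, S => {w | ∀ v, M.R w v → v ∈ ev M A S}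
  | Form.dia A, S => {w | ∃ v, M.R w v ∧ v ∈ ev M A S}
  | Form.mu A, _ => sInf {T | ev M A T ≤ T}
  | Form.nu A, _ => sSup {T | T ≤ ev M A T}
  | Form.nut A, _ => sSup {T | T ≤ ev M A T}

lemma ev_mono (M : Kripke) (A : Form) : Monotone (ev M A) := by
  induction A with
  | atom i => intro S T _; exact le_refl _
  | natom i => intro S T _; exact le_refl _
  | var => intro S T h; exact h
  | and A B ihA ihB =>
      intro S T h
      simp only [ev]
      exact Set.inter_subset_inter (ihA h) (ihB h)
  | or A B ihA ihB =>
      intro S T h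
      simp only [ev]
      exact Set.union_subset_union (ihA h) (ihB h)
  | box A ihA =>
      intro S T h
      simp only [ev]
      intro w hw v hv
      exact ihA h (hw v hv)
  | dia A ihA =>
      intro S T h
      simp only [ev]
      intro w hw
      obtain ⟨v, h1, h2⟩ := hw
      exact ⟨v, h1, ihA h h2⟩
  | mu A ihA => intro S T _; exact le_refl _
  | nu A ihA => intro S T _; exact le_refl _
  | nut A ihA => intro S T _; exact le_refl _

lemma ev_closed (M : Kripke) {A : Form} (hA : A.ClosedF) (S T : Set M.W) :
    ev M A S = ev M A T := by
  induction A with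
  | atom i => rfl
  | natom i => rfl
  | var => exact absurd hA (by simp [Form.ClosedF])
  | and A B ihA ihB =>
      obtain ⟨h1, h2⟩ := hA
      simp only [ev]; rw [ihA h1, ihB h2]
  | or A B ihA ihB =>
      obtain ⟨h1, h2⟩ := hA
      simp only [ev]; rw [ihA h1, ihB h2]
  | box A ihA => simp only [ev]; rw [ihA hA]
  | dia A ihA => simp only [ev]; rw [ihA hA]
  | mu A ihA => rfl
  | nu A ihA => rfl
  | nut A ihA => rfl

lemma mu_prefix (M : Kripke) (A : Form) (S : Set M.W) :
    ev M A (ev M (Form.mu A) S) ≤ ev M (Form.mu A) S := by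
  simp only [ev]
  apply le_sInf
  intro T hT
  exact le_trans (ev_mono M A (sInf_le hT)) hT

lemma mu_least (M : Kripke) (A : Form) (S : Set M.W) {T : Set M.W}
    (hT : ev M A T ≤ T) : ev M (Form.mu A) S ≤ T := sInf_le hT

lemma mu_fixed (M : Kripke) (A : Form) (S : Set M.W) :
    ev M (Form.mu A) S = ev M A (ev M (Form.mu A) S) := by
  apply le_antisymm
  · exact mu_least M A S (ev_mono M A (mu_prefix M A S))
  · exact mu_prefix M A S

lemma nu_postfix (M : Kripke) (A : Form) (S : Set M.W) :
    ev M (Form.nu A) S ≤ ev M A (ev M (Form.nu A) S) := by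
  simp only [ev]
  apply sSup_le
  intro T hT
  exact le_trans hT (ev_mono M A (le_sSup hT))

lemma ev_subst (M : Kripke) (A B : Form) (S : Set M.W) :
    ev M (Form.subst A B) S = ev M A (ev M B S) := by
  induction A generalizing S with
  | atom i => rfl
  | natom i => rfl
  | var => rfl
  | and A1 A2 ih1 ih2 => simp only [Form.subst, ev]; rw [ih1, ih2]
  | or A1 A2 ih1 ih2 => simp only [Form.subst, ev]; rw [ih1, ih2]
  | box A ih => simp only [Form.subst, ev]; rw [ih]
  | dia A ih => simp only [Form.subst, ev]; rw [ih]
  | mu A ih => rfl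
  | nu A ih => rfl
  | nut A ih => rfl

lemma memSSup {α : Type*} {S : Set (Set α)} {x : α} : x ∈ sSup S ↔ ∃ t ∈ S, x ∈ t := by
  rw [Set.sSup_eq_sUnion]; exact Set.mem_sUnion

lemma memSInf {α : Type*} {S : Set (Set α)} {x : α} : x ∈ sInf S ↔ ∀ t ∈ S, x ∈ t := by
  rw [Set.sInf_eq_sInter]; exact Set.mem_sInter

lemma ev_compl (M : Kripke) (A : Form) (S : Set M.W) :
    ev M (Form.compl A) S = (ev M A Sᶜ)ᶜ := by
  induction A generalizing S with
  | atom i => simp [Form.compl, ev]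
  | natom i => simp [Form.compl, ev]
  | var => simp [Form.compl, ev]
  | and A1 A2 ih1 ih2 =>
      simp only [Form.compl, ev, ih1, ih2, Set.compl_inter]
  | or A1 A2 ih1 ih2 =>
      simp only [Form.compl, ev, ih1, ih2, Set.compl_union]
  | box A ih =>
      simp only [Form.compl, ev, ih]
      ext w
      simp only [Set.mem_setOf_eq, Set.mem_compl_iff]
      push_neg
      tauto
  | dia A ih =>
      simp only [Form.compl, ev, ih]
      ext w
      simp only [Set.mem_setOf_eq, Set.mem_compl_iff]
      push_neg
      tauto
  | mu A ih =>
      simp only [Form.compl, ev]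
      ext w
      rw [Set.mem_compl_iff]
      constructor
      · intro hw hinf
        obtain ⟨T, hT, hwT⟩ := memSSup.mp hw
        rw [Set.mem_setOf_eq, ih] at hT
        have hT2 : ev M A Tᶜ ≤ Tᶜ := Set.subset_compl_comm.mp hT
        exact (memSInf.mp hinf Tᶜ hT2) hwT
      · intro hw
        rw [memSInf] at hw; push_neg at hw
        obtain ⟨T, hT, hwT⟩ := hw
        apply memSSup.mpr
        refine ⟨Tᶜ, ?_, hwT⟩
        rw [Set.mem_setOf_eq, ih, compl_compl]
        exact Set.compl_subset_compl.mpr hT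
  | nu A ih =>
      simp only [Form.compl, ev]
      ext w
      rw [Set.mem_compl_iff]
      constructor
      · intro hw hsup
        obtain ⟨T, hT, hwT⟩ := memSSup.mp hsup
        rw [Set.mem_setOf_eq] at hT
        have hT2 : ev M (Form.compl A) Tᶜ ≤ Tᶜ := by
          rw [ih, compl_compl]
          exact Set.compl_subset_compl.mpr hT
        exact (memSInf.mp hw Tᶜ hT2) hwT
      · intro hw
        apply memSInf.mpr
        intro T hT
        rw [Set.mem_setOf_eq, ih] at hT
        by_contra hwT
        apply hw
        apply memSSup.mpr
        refine ⟨Tᶜ, ?_, hwT⟩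
        rw [Set.mem_setOf_eq]
        exact Set.compl_subset_comm.mp hT
  | nut A ih =>
      simp only [Form.compl, ev]
      ext w
      rw [Set.mem_compl_iff]
      constructor
      · intro hw hsup
        obtain ⟨T, hT, hwT⟩ := memSSup.mp hsup
        rw [Set.mem_setOf_eq] at hT
        have hT2 : ev M (Form.compl A) Tᶜ ≤ Tᶜ := by
          rw [ih, compl_compl]
          exact Set.compl_subset_compl.mpr hT
        exact (memSInf.mp hw Tᶜ hT2) hwT
      · intro hw
        apply memSInf.mpr
        intro T hT
        rw [Set.mem_setOf_eq, ih] at hT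
        by_contra hwT
        apply hw
        apply memSSup.mpr
        refine ⟨Tᶜ, ?_, hwT⟩
        rw [Set.mem_setOf_eq]
        exact Set.compl_subset_comm.mp hT

lemma ev_top (M : Kripke) (S : Set M.W) : ev M Form.top S = Set.univ := by
  simp only [Form.top, ev]
  exact Set.union_compl_self _

lemma ev_nu_le_iter (M : Kripke) (A : Form) (S S' : Set M.W) (i : ℕ) :
    ev M (Form.nu A) S ≤ ev M (Form.iter A i) S' := by
  induction i with
  | zero =>
      rw [show Form.iter A 0 = Form.top from rfl, ev_top]
      exact Set.subset_univ _
  | succ n ihn =>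
      rw [show Form.iter A (n+1) = Form.subst A (Form.iter A n) from rfl, ev_subst]
      exact le_trans (nu_postfix M A S) (ev_mono M A ihn)
-- ===== soundness of M =====
def Valid (Γ : Sequent) : Prop :=
  ∀ (M : Kripke) (S : Set M.W) (w : M.W), ∃ C ∈ Γ, w ∈ ev M C S

lemma closedF_or_iff {A B : Form} : (Form.or A B).ClosedF ↔ A.ClosedF ∧ B.ClosedF := Iff.rfl
lemma closedF_and_iff {A B : Form} : (Form.and A B).ClosedF ↔ A.ClosedF ∧ B.ClosedF := Iff.rfl

theorem msound {Γ : Sequent} (hd : MDer Γ) : ClosedSeq Γ → Valid Γ := by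
  induction hd with
  | ax Γ i =>
      intro _ M S w
      by_cases h : w ∈ M.V i
      · exact ⟨Form.atom i, by simp, h⟩
      · refine ⟨Form.natom i, by simp, ?_⟩
        simp only [ev]
        exact h
  | axMu Γ A =>
      intro _ M S w
      by_cases h : w ∈ ev M (Form.mu A) S
      · exact ⟨Form.mu A, by simp, h⟩
      · refine ⟨Form.compl (Form.mu A), by simp, ?_⟩
        rw [ev_compl]
        have heq : ev M (Form.mu A) Sᶜ = ev M (Form.mu A) S := rfl
        rw [heq]
        exact h
  | orR Γ A B hpre ih =>
      intro hcl M S w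
      have hAB : (Form.or A B).ClosedF := hcl _ (Finset.mem_insert_self _ _)
      rw [closedF_or_iff] at hAB
      have hcl' : ClosedSeq (insert A (insert B Γ)) := by
        intro C hC
        rcases Finset.mem_insert.mp hC with rfl | hC
        · exact hAB.1
        rcases Finset.mem_insert.mp hC with rfl | hC
        · exact hAB.2
        · exact hcl _ (Finset.mem_insert_of_mem hC)
      obtain ⟨C, hC, hw⟩ := ih hcl' M S w
      rcases Finset.mem_insert.mp hC with rfl | hC
      · exact ⟨Form.or C B, Finset.mem_insert_self _ _, by simp only [ev]; exact Or.inl hw⟩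
      rcases Finset.mem_insert.mp hC with rfl | hC
      · exact ⟨Form.or A C, Finset.mem_insert_self _ _, by simp only [ev]; exact Or.inr hw⟩
      · exact ⟨C, Finset.mem_insert_of_mem hC, hw⟩
  | andR Γ A B h1 h2 ih1 ih2 =>
      intro hcl M S w
      have hAB : (Form.and A B).ClosedF := hcl _ (Finset.mem_insert_self _ _)
      rw [closedF_and_iff] at hAB
      have hclΓ : ∀ C ∈ Γ, C.ClosedF := fun C hC => hcl _ (Finset.mem_insert_of_mem hC)
      have hcl1 : ClosedSeq (insert A Γ) := by
        intro C hC
        rcases Finset.mem_insert.mp hC with rfl | hC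
        · exact hAB.1
        · exact hclΓ _ hC
      have hcl2 : ClosedSeq (insert B Γ) := by
        intro C hC
        rcases Finset.mem_insert.mp hC with rfl | hC
        · exact hAB.2
        · exact hclΓ _ hC
      obtain ⟨C, hC, hw⟩ := ih1 hcl1 M S w
      rcases Finset.mem_insert.mp hC with rfl | hC
      · obtain ⟨C', hC', hw'⟩ := ih2 hcl2 M S w
        rcases Finset.mem_insert.mp hC' with rfl | hC'
        · exact ⟨Form.and C C', Finset.mem_insert_self _ _, by simp only [ev]; exact ⟨hw, hw'⟩⟩
        · exact ⟨C', Finset.mem_insert_of_mem hC', hw'⟩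
      · exact ⟨C, Finset.mem_insert_of_mem hC, hw⟩
  | boxR Γ S' A hpre ih =>
      intro hcl M S w
      have hA : A.ClosedF :=
        hcl (Form.box A) (Finset.mem_union_right _ (Finset.mem_insert_self _ _))
      have hclΓ : ∀ C ∈ Γ, C.ClosedF := by
        intro C hC
        exact hcl (Form.dia C) (Finset.mem_union_left _ (Finset.mem_image_of_mem _ hC))
      have hcl' : ClosedSeq (insert A Γ) := by
        intro C hC
        rcases Finset.mem_insert.mp hC with rfl | hC
        · exact hA
        · exact hclΓ _ hC
      by_cases hex : ∃ B ∈ Γ, w ∈ ev M (Form.dia B) S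
      · obtain ⟨B, hB, hw⟩ := hex
        exact ⟨Form.dia B, Finset.mem_union_left _ (Finset.mem_image_of_mem _ hB), hw⟩
      · push_neg at hex
        refine ⟨Form.box A, Finset.mem_union_right _ (Finset.mem_insert_self _ _), ?_⟩
        simp only [ev, Set.mem_setOf_eq]
        intro v hv
        obtain ⟨C, hC, hCv⟩ := ih hcl' M S v
        rcases Finset.mem_insert.mp hC with rfl | hC
        · exact hCv
        · exfalso
          apply hex C hC
          simp only [ev, Set.mem_setOf_eq]
          exact ⟨v, hv, hCv⟩
  | clo Γ A hpre ih =>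
      intro hcl M S w
      have hclΓ : ∀ C ∈ Γ, C.ClosedF := fun C hC => hcl _ (Finset.mem_insert_of_mem hC)
      have hcl' : ClosedSeq (insert (Form.subst A (Form.mu A)) Γ) := by
        intro C hC
        rcases Finset.mem_insert.mp hC with rfl | hC
        · exact Form.closedF_subst _ _ trivial
        · exact hclΓ _ hC
      obtain ⟨C, hC, hw⟩ := ih hcl' M S w
      rcases Finset.mem_insert.mp hC with rfl | hC
      · refine ⟨Form.mu A, Finset.mem_insert_self _ _, ?_⟩
        rw [ev_subst, ← mu_fixed] at hw
        exact hw
      · exact ⟨C, Finset.mem_insert_of_mem hC, hw⟩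
  | ind A B hpre ih =>
      intro hcl M S w
      have hB : B.ClosedF := hcl _ (Finset.mem_insert_of_mem (Finset.mem_singleton_self _))
      have hcl' : ClosedSeq (insert (Form.compl (Form.subst A B)) {B}) := by
        intro C hC
        rcases Finset.mem_insert.mp hC with rfl | hC
        · exact Form.closedF_compl _ (Form.closedF_subst _ _ hB)
        · rw [Finset.mem_singleton] at hC; subst hC; exact hB
      have hkey : ev M (Form.mu A) S ≤ ev M B S := by
        apply mu_least
        intro x hx
        obtain ⟨C, hC, hCx⟩ := ih hcl' M S x
        rcases Finset.mem_insert.mp hC with rfl | hC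
        · exfalso
          rw [ev_compl, ev_subst, ev_closed M hB Sᶜ S] at hCx
          exact hCx hx
        · rw [Finset.mem_singleton] at hC; subst hC; exact hCx
      by_cases hb : w ∈ ev M B S
      · exact ⟨B, Finset.mem_insert_of_mem (Finset.mem_singleton_self _), hb⟩
      · refine ⟨Form.compl (Form.mu A), Finset.mem_insert_self _ _, ?_⟩
        rw [ev_compl]
        have heq : ev M (Form.mu A) Sᶜ = ev M (Form.mu A) S := rfl
        rw [heq]
        intro hc
        exact hb (hkey hc)
  | cut Γ A hA1 hA2 h1 h2 ih1 ih2 =>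
      intro hcl M S w
      have hcl1 : ClosedSeq (insert A Γ) := by
        intro C hC
        rcases Finset.mem_insert.mp hC with rfl | hC
        · exact hA2
        · exact hcl _ hC
      have hcl2 : ClosedSeq (insert (Form.compl A) Γ) := by
        intro C hC
        rcases Finset.mem_insert.mp hC with rfl | hC
        · exact Form.closedF_compl _ hA2
        · exact hcl _ hC
      obtain ⟨C, hC, hw⟩ := ih1 hcl1 M S w
      rcases Finset.mem_insert.mp hC with rfl | hC
      · obtain ⟨C', hC', hw'⟩ := ih2 hcl2 M S w
        rcases Finset.mem_insert.mp hC' with rfl | hC'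
        · exfalso
          rw [ev_compl, ev_closed M hA2 Sᶜ S] at hw'
          exact hw' hw
        · exact ⟨C', hC', hw'⟩
      · exact ⟨C, hC, hw⟩
-- ===== canonical model =====
def WorldP (Γ : Sequent) : Prop := Sat Γ ∧ ¬ KDer Γ ∧ ∀ C ∈ Γ, Good C

def World : Type := {Γ : Sequent // WorldP Γ}

def CM : Kripke :=
  ⟨World, fun w v => ∀ B : Form, Form.dia B ∈ w.1 → B ∈ v.1,
    fun i => {w : World | Form.atom i ∉ w.1}⟩

lemma extend {Γ : Sequent} (hnd : ¬ KDer Γ) (hG : ∀ C ∈ Γ, Good C) :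
    ∃ w : World, Γ ⊆ w.1 := by
  obtain ⟨Δ, hsub, hnd', hSat, hGood⟩ :=
    nsat ((CLS Γ).sup Form.lev) Γ ∅
      (by rwa [Finset.union_empty]) (by rwa [Finset.union_empty])
      (by
        intro C hC E hE
        apply Finset.le_sup (f := Form.lev)
        exact Finset.mem_biUnion.mpr ⟨C, hC, hE⟩)
      (by simp) (by simp) (by simp) (by simp)
  refine ⟨⟨Δ, hSat, hnd', hGood⟩, ?_⟩
  rw [Finset.union_empty] at hsub
  exact hsub

def diaBody : Form → Sequent
  | Form.dia B => {B}
  | _ => ∅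

def diaBodies (Γ : Sequent) : Sequent := Γ.biUnion diaBody

lemma mem_diaBodies {Γ : Sequent} {B : Form} : B ∈ diaBodies Γ ↔ Form.dia B ∈ Γ := by
  simp only [diaBodies, Finset.mem_biUnion]
  constructor
  · rintro ⟨C, hC, hB⟩
    cases C <;> simp [diaBody] at hB
    subst hB; exact hC
  · intro h
    exact ⟨Form.dia B, h, by simp [diaBody]⟩

lemma succ_exists (w : World) {A : Form} (hA : Form.box A ∈ w.1) :
    ∃ v : World, (∀ B : Form, Form.dia B ∈ w.1 → B ∈ v.1) ∧ A ∈ v.1 := by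
  obtain ⟨hSat, hnd, hGood⟩ := w.2
  have hseednd : ¬ KDer (insert A (diaBodies w.1)) := by
    intro hk
    have hbox := KDer.boxR (diaBodies w.1) w.1 A hk
    have heq : (diaBodies w.1).image Form.dia ∪ insert (Form.box A) w.1 = w.1 := by
      apply Finset.Subset.antisymm
      · apply Finset.union_subset
        · intro x hx
          obtain ⟨B, hB, rfl⟩ := Finset.mem_image.mp hx
          exact mem_diaBodies.mp hB
        · exact Finset.insert_subset hA (le_refl _)
      · exact (Finset.subset_insert _ _).trans Finset.subset_union_right
    rw [heq] at hbox
    exact hnd hbox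
  have hseedG : ∀ C ∈ insert A (diaBodies w.1), Good C := by
    intro C hC
    rcases Finset.mem_insert.mp hC with rfl | hC
    · exact good_box (hGood _ hA)
    · exact good_dia (hGood _ (mem_diaBodies.mp hC))
  obtain ⟨v, hv⟩ := extend hseednd hseedG
  refine ⟨v, ?_, hv (Finset.mem_insert_self _ _)⟩
  intro B hB
  exact hv (Finset.mem_insert_of_mem (mem_diaBodies.mpr hB))

-- ===== truth lemma =====
theorem truth : ∀ (n : ℕ) (C : Form), C.lev ≤ n → C.IsL0 →
    ∀ (D : Form), D.IsL0 → D.ClosedF →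
    ∀ (S : Set World), (∀ w ∈ S, D ∉ w.1) →
    ∀ w : World, w ∈ ev CM C S → Form.subst C D ∉ w.1 := by
  intro n
  induction n using Nat.strong_induction_on with
  | _ n ihn =>
  intro C
  induction C with
  | atom i =>
      intro _ _ D _ _ S hS w hw
      simp only [ev, CM, Set.mem_setOf_eq] at hw
      exact hw
  | natom i =>
      intro _ _ D _ _ S hS w hw hmem
      simp only [ev, CM, Set.mem_compl_iff, Set.mem_setOf_eq, not_not] at hw
      apply w.2.2.1
      have hmem' : Form.natom i ∈ w.1 := hmem
      have hax := KDer.ax w.1 i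
      rwa [Finset.insert_eq_self.mpr hmem', Finset.insert_eq_self.mpr (not_not.mp hw)] at hax
  | var =>
      intro _ _ D _ _ S hS w hw
      exact hS w hw
  | and A B ihA ihB =>
      intro hlev hL0 D hD1 hD2 S hS w hw hmem
      have hmem' : Form.and (Form.subst A D) (Form.subst B D) ∈ w.1 := hmem
      have hch := w.2.1.1.2.1 _ _ hmem'
      simp only [ev, Set.mem_inter_iff] at hw
      rcases hch with h | h
      · exact ihA (le_trans (le_max_left _ _) hlev) hL0.1 D hD1 hD2 S hS w hw.1 h
      · exact ihB (le_trans (le_max_right _ _) hlev) hL0.2 D hD1 hD2 S hS w hw.2 h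
  | or A B ihA ihB =>
      intro hlev hL0 D hD1 hD2 S hS w hw hmem
      have hmem' : Form.or (Form.subst A D) (Form.subst B D) ∈ w.1 := hmem
      have hch := w.2.1.1.1 _ _ hmem'
      simp only [ev, Set.mem_union] at hw
      rcases hw with h | h
      · exact ihA (le_trans (le_max_left _ _) hlev) hL0.1 D hD1 hD2 S hS w h hch.1
      · exact ihB (le_trans (le_max_right _ _) hlev) hL0.2 D hD1 hD2 S hS w h hch.2
  | box A ihA =>
      intro hlev hL0 D hD1 hD2 S hS w hw hmem
      have hmem' : Form.box (Form.subst A D) ∈ w.1 := hmem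
      obtain ⟨v, hv1, hv2⟩ := succ_exists w hmem'
      have hwv : v ∈ ev CM A S := hw v hv1
      exact ihA hlev hL0 D hD1 hD2 S hS v hwv hv2
  | dia A ihA =>
      intro hlev hL0 D hD1 hD2 S hS w hw hmem
      have hmem' : Form.dia (Form.subst A D) ∈ w.1 := hmem
      obtain ⟨v, hv1, hv2⟩ := hw
      have : Form.subst A D ∈ v.1 := hv1 _ hmem'
      exact ihA hlev hL0 D hD1 hD2 S hS v hv2 this
  | mu A ihA =>
      intro hlev hL0 D hD1 hD2 S hS w hw hmem
      have hmem' : Form.mu A ∈ w.1 := hmem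
      have hlevA : A.lev ≤ n := le_trans (Nat.le_succ _) hlev
      set Sx : Set World := ev CM (Form.mu A) S ∩ {v : World | Form.mu A ∈ v.1}ᶜ with hSx
      have hpre : ev CM A Sx ≤ Sx := by
        intro x hx
        constructor
        · have h1 : Sx ≤ ev CM (Form.mu A) S := Set.inter_subset_left
          have h2 := ev_mono CM A h1 hx
          rw [← mu_fixed CM A S] at h2
          exact h2
        · intro hxTr
          change Form.mu A ∈ x.1 at hxTr
          have hnot := ihA hlevA hL0 (Form.mu A) (by exact hL0) trivial Sx
            (fun v hv => hv.2) x hx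
          have hsat := x.2.1.1.2.2 A hxTr
          exact hnot hsat
      have hle : ev CM (Form.mu A) S ≤ Sx := mu_least CM A S hpre
      exact (hle hw).2 hmem'
  | nu A ihA =>
      intro hlev hL0 D hD1 hD2 S hS w hw hmem
      have hmem' : Form.nu A ∈ w.1 := hmem
      obtain ⟨i, hi⟩ := w.2.1.2 A hmem'
      have hlevA : A.lev < n := by
        have : A.lev + 1 ≤ n := hlev
        omega
      have happ := ihn A.lev hlevA (Form.iter A i) (Form.lev_iter A i)
        (Form.isL0_iter A hL0 i) Form.top Form.isL0_top Form.closedF_top ∅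
        (by simp) w (ev_nu_le_iter CM A S ∅ i hw)
      rw [Form.subst_of_closed _ _ (Form.closedF_iter A i)] at happ
      exact happ hi
  | nut A ihA =>
      intro _ hL0
      exact absurd hL0 (by simp [Form.IsL0])


/-- Main theorem: every `L0` sequent derivable in the finitary
system `M` is derivable in the cut-free infinitary system `K_ω`. -/
theorem stmt11 (Γ : Sequent) (hΓ : L0Seq Γ)
    (hd : MDer Γ) : KDer Γ := by
  by_contra hK
  have hG : ∀ C ∈ Γ, Good C := fun C hC => ⟨(hΓ C hC).1, (hΓ C hC).2⟩
  obtain ⟨w, hw⟩ := extend hK hG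
  obtain ⟨C, hC, hwC⟩ := msound hd (fun C hC => (hΓ C hC).2) CM ∅ w
  have ht := truth C.lev C le_rfl (hΓ C hC).1 Form.top Form.isL0_top
    Form.closedF_top ∅ (by simp) w hwC
  rw [Form.subst_of_closed _ _ (hΓ C hC).2] at ht
  exact ht (hw hC)

end OneVarMu
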